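/- Let G = (V,E,c) be an edge-weighted directed graph without negative-weight closed walks. Fix a ∼-equivalence class [v_k] with at least two nodes, and let E_k^c = {(i,j) ∈ E : i,j ∈ [v_k], c_{ij} = d_{ij}}. Then a subset R_k ⊆ E_k^c is a redundant edge set of the weighted subgraph ([v_k], E_k^c, c) if and only if the unweighted directed graphs ([v_k], E_k^c) and ([v_k], E_k^c ∖ R_k) have the same reachability relation (i.e., for all i, j there is a walk i to j in one iff in the other). -/

import Mathlib

/-- `l` is a walk in edge set `E`: a nonempty list of vertices with consecutive edges. -/
def IsWalk {V : Type*} (E : Set (V × V)) (l : List V) : Prop :=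
  l ≠ [] ∧ l.Chain' (fun a b => (a, b) ∈ E)

/-- The weight of a walk: sum of edge weights along consecutive pairs (with multiplicity). -/
def walkWeight {V : Type*} (c : V → V → ℝ) (l : List V) : ℝ :=
  ((l.zip l.tail).map fun p => c p.1 p.2).sum

/-- `l` is a walk from `u` to `v`. -/
def IsWalkFrom {V : Type*} (E : Set (V × V)) (u v : V) (l : List V) : Prop :=
  IsWalk E l ∧ l.head? = some u ∧ l.getLast? = some v

/-- A closed walk: a walk with at least one edge whose first and last vertices agree. -/
def IsClosedWalk {V : Type*} (E : Set (V × V)) (l : List V) : Prop :=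
  IsWalk E l ∧ 2 ≤ l.length ∧ l.head? = l.getLast?

/-- A simple path from `u` to `v`: a walk with all traversed vertices distinct. -/
def IsPathFrom {V : Type*} (E : Set (V × V)) (u v : V) (l : List V) : Prop :=
  IsWalkFrom E u v l ∧ l.Nodup

/-- A cycle: a closed walk all of whose vertices other than the repeated endpoint are distinct. -/
def IsCycle {V : Type*} (E : Set (V × V)) (l : List V) : Prop :=
  IsClosedWalk E l ∧ l.tail.Nodup

/-- `x` satisfies the precedence relation system of `(V, E, c)`. -/
def Satisfies {V : Type*} (E : Set (V × V)) (c : V → V → ℝ) (x : V → ℝ) : Prop :=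
  ∀ e ∈ E, x e.1 - x e.2 ≤ c e.1 e.2

/-- `R` is a redundant edge set of `(V, E, c)`: every edge of `R` has a replacement path
in the reduced graph of no greater weight. -/
def IsRedundantEdgeSet {V : Type*} (E : Set (V × V)) (c : V → V → ℝ)
    (R : Set (V × V)) : Prop :=
  R ⊆ E ∧ ∀ e ∈ R, ∃ l, IsPathFrom (E \ R) e.1 e.2 l ∧ walkWeight c l ≤ c e.1 e.2

/-- `w` is the minimum weight of a walk from `i` to `j` in `(V, E, c)` (attained). -/
def IsMinWalkWeight {V : Type*} (E : Set (V × V)) (c : V → V → ℝ) (i j : V) (w : ℝ) : Prop :=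
  (∃ l, IsWalkFrom E i j l ∧ walkWeight c l = w) ∧
  ∀ l, IsWalkFrom E i j l → w ≤ walkWeight c l

/-- The relation `∼`: `i ∼ j` iff `i = j` or some zero-weight closed walk traverses both. -/
def Sim {V : Type*} (E : Set (V × V)) (c : V → V → ℝ) (i j : V) : Prop :=
  i = j ∨ ∃ l, IsClosedWalk E l ∧ walkWeight c l = 0 ∧ i ∈ l ∧ j ∈ l

section Aux
variable {V : Type*} {E F : Set (V × V)} {c : V → V → ℝ} {u v w : V}
lemma walkWeight_single (c : V → V → ℝ) (a : V) : walkWeight c [a] = 0 := by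
  simp [walkWeight]
lemma walkWeight_cons_cons (c : V → V → ℝ) (a b : V) (t : List V) :
    walkWeight c (a :: b :: t) = c a b + walkWeight c (b :: t) := by
  simp [walkWeight]
lemma iwf_single (u : V) : IsWalkFrom E u u [u] :=
  ⟨⟨by simp, List.isChain_singleton _⟩, rfl, rfl⟩
lemma iwf_pair (h : (u, v) ∈ E) : IsWalkFrom E u v [u, v] :=
  ⟨⟨by simp, List.isChain_pair.2 h⟩, rfl, rfl⟩
lemma iwf_cons_cons {a b : V} {t : List V} :
    IsWalkFrom E u w (a :: b :: t) ↔ u = a ∧ (a, b) ∈ E ∧ IsWalkFrom E b w (b :: t) := by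
  constructor
  · rintro ⟨⟨-, hch⟩, hh, hl⟩
    rw [List.Chain', List.isChain_cons_cons] at hch
    refine ⟨by simpa using hh.symm, hch.1, ⟨⟨by simp, hch.2⟩, rfl, ?_⟩⟩
    rw [List.getLast?_cons_cons] at hl; exact hl
  · rintro ⟨rfl, he, ⟨⟨-, hch⟩, -, hl⟩⟩
    exact ⟨⟨by simp, List.isChain_cons_cons.2 ⟨he, hch⟩⟩, rfl, by rw [List.getLast?_cons_cons]; exact hl⟩

lemma iwf_single_iff {a : V} : IsWalkFrom E u w [a] ↔ u = a ∧ w = a := by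
  constructor
  · rintro ⟨-, hh, hl⟩
    simp at hh hl; exact ⟨hh.symm, hl.symm⟩
  · rintro ⟨rfl, rfl⟩; exact iwf_single _

lemma iwf_append {l1 l2 : List V} (h1 : IsWalkFrom E u v l1) (h2 : IsWalkFrom E v w l2) :
    IsWalkFrom E u w (l1 ++ l2.tail) ∧
      walkWeight c (l1 ++ l2.tail) = walkWeight c l1 + walkWeight c l2 := by
  induction l1 generalizing u with
  | nil => exact absurd rfl h1.1.1
  | cons a t ih =>
    cases t with
    | nil =>
      obtain ⟨hu, hv⟩ := iwf_single_iff.1 h1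
      obtain ⟨b, t2, rfl⟩ : ∃ b t2, l2 = b :: t2 := by
        cases l2 with
        | nil => exact absurd rfl h2.1.1
        | cons b t2 => exact ⟨b, t2, rfl⟩
      have hb : b = v := by simpa using h2.2.1
      have hab : a = b := (hb.trans hv).symm
      have e : ([a] ++ (b :: t2).tail) = b :: t2 := by rw [hab]; rfl
      rw [e]
      have huv : u = v := hu.trans hv.symm
      exact ⟨huv ▸ h2, by rw [walkWeight_single]; ring⟩
    | cons b t' =>
      obtain ⟨rfl, he, hw⟩ := iwf_cons_cons.1 h1
      obtain ⟨hwalk, hweight⟩ := ih hw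
      constructor
      · exact iwf_cons_cons.2 ⟨rfl, he, by simpa using hwalk⟩
      · have : (u :: b :: t') ++ l2.tail = u :: b :: (t' ++ l2.tail) := by simp
        rw [this, walkWeight_cons_cons, walkWeight_cons_cons]
        have : (b :: t') ++ l2.tail = b :: (t' ++ l2.tail) := by simp
        rw [this] at hweight
        rw [hweight]; ring

lemma iwf_split {l1 l2 : List V} (h : IsWalkFrom E u w (l1 ++ v :: l2)) :
    IsWalkFrom E u v (l1 ++ [v]) ∧ IsWalkFrom E v w (v :: l2) ∧
      walkWeight c (l1 ++ v :: l2) = walkWeight c (l1 ++ [v]) + walkWeight c (v :: l2) := by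
  induction l1 generalizing u with
  | nil =>
    have hu : u = v := by simpa using h.2.1.symm
    subst hu
    exact ⟨iwf_single u, by simpa using h, by simp [walkWeight_single]⟩
  | cons a t ih =>
    cases t with
    | nil =>
      obtain ⟨rfl, he, hw⟩ := iwf_cons_cons.1 (by simpa using h)
      refine ⟨iwf_pair he, hw, ?_⟩
      show walkWeight c (u :: v :: l2) = _
      rw [walkWeight_cons_cons]
      have e1 : [u] ++ [v] = [u, v] := by simp
      rw [e1]
      have : walkWeight c [u, v] = c u v := by simp [walkWeight]
      rw [this]
    | cons b t' =>
      have h' : IsWalkFrom E u w (a :: b :: (t' ++ v :: l2)) := by simpa using h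
      obtain ⟨rfl, he, hw⟩ := iwf_cons_cons.1 h'
      obtain ⟨h1, h2, h3⟩ := ih (by simpa using hw)
      refine ⟨?_, h2, ?_⟩
      · have : (u :: b :: t') ++ [v] = u :: b :: (t' ++ [v]) := by simp
        rw [this]
        exact iwf_cons_cons.2 ⟨rfl, he, by simpa using h1⟩
      · show walkWeight c (u :: b :: (t' ++ v :: l2)) = _
        have e2 : (u :: b :: t') ++ [v] = u :: b :: (t' ++ [v]) := by simp
        rw [walkWeight_cons_cons, e2, walkWeight_cons_cons]
        have h3' : walkWeight c (b :: (t' ++ v :: l2)) =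
            walkWeight c (b :: (t' ++ [v])) + walkWeight c (v :: l2) := by simpa using h3
        rw [h3']; ring

lemma mem_mem_split {l : List V} (hu : u ∈ l) (hv : v ∈ l) :
    (∃ l1 l2, l = l1 ++ u :: l2 ∧ v ∈ u :: l2) ∨
    (∃ l1 l2, l = l1 ++ v :: l2 ∧ u ∈ v :: l2) := by
  induction l with
  | nil => simp at hu
  | cons a t ih =>
    by_cases hau : a = u
    · subst hau
      rcases List.mem_cons.1 hv with h | h
      · exact Or.inl ⟨[], t, rfl, by simp [h]⟩
      · exact Or.inl ⟨[], t, rfl, by simp [h]⟩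
    · by_cases hav : a = v
      · subst hav
        rcases List.mem_cons.1 hu with h | h
        · exact absurd h.symm hau
        · exact Or.inr ⟨[], t, rfl, by simp [h]⟩
      · have hu' : u ∈ t := by rcases List.mem_cons.1 hu with h | h; exact absurd h.symm hau; exact h
        have hv' : v ∈ t := by rcases List.mem_cons.1 hv with h | h; exact absurd h.symm hav; exact h
        rcases ih hu' hv' with ⟨l1, l2, rfl, h⟩ | ⟨l1, l2, rfl, h⟩
        · exact Or.inl ⟨a :: l1, l2, rfl, h⟩
        · exact Or.inr ⟨a :: l1, l2, rfl, h⟩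

lemma closed_split_aux {l1 l2 : List V} (h : IsClosedWalk E (l1 ++ u :: l2))
    (hv : v ∈ u :: l2) :
    ∃ lu lv, IsWalkFrom E u v lu ∧ IsWalkFrom E v u lv ∧
      walkWeight c lu + walkWeight c lv = walkWeight c (l1 ++ u :: l2) := by
  obtain ⟨hw, hlen, hcl⟩ := h
  obtain ⟨a, ha⟩ : ∃ a, (l1 ++ u :: l2).head? = some a := by
    cases l1 <;> simp
  have hwalk : IsWalkFrom E a a (l1 ++ u :: l2) := ⟨hw, ha, by rw [← hcl]; exact ha⟩
  obtain ⟨hA, hB, hwt⟩ := iwf_split (c := c) hwalk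
  -- hA : a → u on l1 ++ [u], hB : u → a on u :: l2
  obtain ⟨m1, m2, hm⟩ := List.append_of_mem hv
  rw [hm] at hB
  obtain ⟨hB1, hB2, hwt2⟩ := iwf_split (c := c) hB
  -- hB1 : u → v on m1 ++ [v], hB2 : v → a on v :: m2
  obtain ⟨hC, hwtC⟩ := iwf_append (c := c) hB2 hA
  refine ⟨m1 ++ [v], (v :: m2) ++ (l1 ++ [u]).tail, hB1, hC, ?_⟩
  rw [hwtC, hwt, hm, hwt2]; ring

lemma closed_split (h : IsClosedWalk E l) (hu : u ∈ l) (hv : v ∈ l) :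
    ∃ lu lv, IsWalkFrom E u v lu ∧ IsWalkFrom E v u lv ∧
      walkWeight c lu + walkWeight c lv = walkWeight c l := by
  rcases mem_mem_split hu hv with ⟨l1, l2, rfl, h'⟩ | ⟨l1, l2, rfl, h'⟩
  · exact closed_split_aux h h'
  · obtain ⟨lv, lu, h1, h2, h3⟩ := closed_split_aux h h'
    exact ⟨lu, lv, h2, h1, by rw [← h3]; ring⟩

lemma not_nodup_split {l : List V} (h : ¬ l.Nodup) :
    ∃ l1 x l2, l = l1 ++ x :: l2 ∧ x ∈ l2 := by
  induction l with
  | nil => simp at h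
  | cons a t ih =>
    by_cases ha : a ∈ t
    · exact ⟨[], a, t, rfl, ha⟩
    · have ht : ¬ t.Nodup := fun hn => h (List.nodup_cons.2 ⟨ha, hn⟩)
      obtain ⟨l1, x, l2, rfl, hx⟩ := ih ht
      exact ⟨a :: l1, x, l2, rfl, hx⟩

lemma walk_to_path {i j : V} :
    ∀ (n : ℕ) (l : List V), l.length ≤ n → IsWalkFrom F i j l →
      ∃ p, IsWalkFrom F i j p ∧ p.Nodup := by
  intro n
  induction n with
  | zero =>
    intro l hlen h
    have : l = [] := List.length_eq_zero_iff.1 (Nat.le_zero.1 hlen)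
    exact absurd this h.1.1
  | succ n ih =>
    intro l hlen h
    by_cases hnd : l.Nodup
    · exact ⟨l, h, hnd⟩
    · obtain ⟨l1, x, l2, rfl, hx⟩ := not_nodup_split hnd
      obtain ⟨m1, m2, hm⟩ := List.append_of_mem hx
      subst hm
      obtain ⟨hA, hB, -⟩ := iwf_split (c := fun _ _ => (0:ℝ)) h
      -- hB : x → j on x :: (m1 ++ x :: m2) = (x :: m1) ++ x :: m2
      have hB' : IsWalkFrom F x j ((x :: m1) ++ x :: m2) := by simpa using hB
      obtain ⟨-, hB2, -⟩ := iwf_split (c := fun _ _ => (0:ℝ)) hB'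
      obtain ⟨hC, -⟩ := iwf_append (c := fun _ _ => (0:ℝ)) hA hB2
      refine ih (l1 ++ [x] ++ (x :: m2).tail) ?_ hC
      simp only [List.length_append, List.length_cons, List.tail_cons,
        List.length_singleton, List.length_nil] at hlen ⊢
      omega

lemma walk_weight_le {q : V → ℝ} {i j : V}
    (hq : ∀ a b, (a, b) ∈ F → c a b ≤ q b - q a) :
    ∀ l, IsWalkFrom F i j l → walkWeight c l ≤ q j - q i := by
  intro l
  induction l generalizing i with
  | nil => intro h; exact absurd rfl h.1.1
  | cons a t ih =>
    intro h
    cases t with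
    | nil =>
      obtain ⟨rfl, rfl⟩ := iwf_single_iff.1 h
      simp [walkWeight_single]
    | cons b t' =>
      obtain ⟨rfl, he, hw⟩ := iwf_cons_cons.1 h
      have h1 := hq _ _ he
      have h2 := ih hw
      rw [walkWeight_cons_cons]
      linarith

lemma iwf_mono {E' : Set (V × V)} (hE : E ⊆ E') {i j : V} {l : List V}
    (h : IsWalkFrom E i j l) : IsWalkFrom E' i j l :=
  ⟨⟨h.1.1, h.1.2.imp fun _ _ hab => hE hab⟩, h.2⟩
end Aux


section Main
variable {V : Type*} {E : Set (V × V)} {c : V → V → ℝ}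

lemma exists_pot {v0 x : V} (hx : Sim E c x v0) :
    ∃ P Q, IsWalkFrom E x v0 P ∧ IsWalkFrom E v0 x Q ∧
      walkWeight c P + walkWeight c Q = 0 := by
  rcases hx with rfl | ⟨l, hl, hw0, hxl, hv0l⟩
  · exact ⟨[x], [x], iwf_single x, iwf_single x, by simp [walkWeight_single]⟩
  · obtain ⟨lu, lv, h1, h2, h3⟩ := closed_split (c := c) hl hxl hv0l
    exact ⟨lu, lv, h1, h2, by rw [h3, hw0]⟩

lemma walk_reduce {Ekc Rk : Set (V × V)}
    (hred : ∀ e ∈ Rk, ∃ l, IsPathFrom (Ekc \ Rk) e.1 e.2 l ∧ walkWeight c l ≤ c e.1 e.2)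
    {i j : V} : ∀ l, IsWalkFrom Ekc i j l → ∃ l', IsWalkFrom (Ekc \ Rk) i j l' := by
  intro l
  induction l generalizing i with
  | nil => intro h; exact absurd rfl h.1.1
  | cons a t ih =>
    intro h
    cases t with
    | nil =>
      obtain ⟨rfl, rfl⟩ := iwf_single_iff.1 h
      exact ⟨_, iwf_single _⟩
    | cons b t' =>
      obtain ⟨rfl, he, hw⟩ := iwf_cons_cons.1 h
      obtain ⟨m, hm⟩ := ih hw
      by_cases hr : (i, b) ∈ Rk
      · obtain ⟨p, ⟨hp, -⟩, -⟩ := hred (i, b) hr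
        exact ⟨p ++ m.tail, (iwf_append (c := c) hp hm).1⟩
      · have hab : IsWalkFrom (Ekc \ Rk) i b [i, b] := iwf_pair ⟨he, hr⟩
        exact ⟨[i, b] ++ m.tail, (iwf_append (c := c) hab hm).1⟩

end Main

theorem stmt18 {V : Type*} (E : Set (V × V)) (c : V → V → ℝ)
    (hnn : ∀ l : List V, IsClosedWalk E l → 0 ≤ walkWeight c l)
    (v0 : V) (S : Set V) (hS : S = {x : V | Sim E c x v0})
    (htwo : ∃ a ∈ S, ∃ b ∈ S, a ≠ b)
    (d : V → V → ℝ)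
    (hd : ∀ p : V × V, p ∈ E → p.1 ∈ S → p.2 ∈ S →
      IsMinWalkWeight E c p.1 p.2 (d p.1 p.2))
    (Ekc : Set (V × V))
    (hEkc : Ekc = {p ∈ E | p.1 ∈ S ∧ p.2 ∈ S ∧ c p.1 p.2 = d p.1 p.2})
    (Rk : Set (V × V)) (hRk : Rk ⊆ Ekc) :
    IsRedundantEdgeSet Ekc c Rk ↔
      ∀ i ∈ S, ∀ j ∈ S,
        ((∃ l : List V, IsWalkFrom Ekc i j l) ↔
          (∃ l : List V, IsWalkFrom (Ekc \ Rk) i j l)) := by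
  have hEsub : Ekc ⊆ E := by rw [hEkc]; intro p hp; exact hp.1
  constructor
  · rintro ⟨-, hred⟩ i _ j _
    constructor
    · rintro ⟨l, hl⟩
      exact walk_reduce hred l hl
    · rintro ⟨l, hl⟩
      exact ⟨l, iwf_mono (Set.diff_subset) hl⟩
  · intro hreach
    -- potentials
    have hpot : ∀ x ∈ S, ∃ P Q, IsWalkFrom E x v0 P ∧ IsWalkFrom E v0 x Q ∧
        walkWeight c P + walkWeight c Q = 0 := by
      intro x hx
      rw [hS] at hx
      exact exists_pot hx
    choose P Q hP hQ hPQ using hpot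
    classical
    set q : V → ℝ := fun x => if hx : x ∈ S then walkWeight c (Q x hx) else 0 with hq
    have hqS : ∀ x (hx : x ∈ S), q x = walkWeight c (Q x hx) := by
      intro x hx; simp [hq, hx]
    -- every edge of Ekc satisfies c a b ≤ q b - q a
    have hedge : ∀ a b, (a, b) ∈ Ekc → c a b ≤ q b - q a := by
      intro a b hab
      rw [hEkc] at hab
      obtain ⟨habE, haS, hbS, hcd⟩ := hab
      obtain ⟨hwalk, hweight⟩ := iwf_append (c := c) (hP a haS) (hQ b hbS)
      have hmin := (hd (a, b) habE haS hbS).2 _ hwalk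
      rw [hweight] at hmin
      have := hPQ a haS
      rw [hqS a haS, hqS b hbS]
      simp only at hmin hcd ⊢
      linarith [hcd ▸ hmin]
    -- every edge of Ekc satisfies q b - q a ≤ c a b (via closed walk)
    have hedge2 : ∀ a b, (a, b) ∈ Ekc → q b - q a ≤ c a b := by
      intro a b hab
      have habE : (a, b) ∈ E := hEsub hab
      have haS : a ∈ S := by rw [hEkc] at hab; exact hab.2.1
      have hbS : b ∈ S := by rw [hEkc] at hab; exact hab.2.2.1
      obtain ⟨hw1, hwt1⟩ := iwf_append (c := c) (iwf_pair habE) (hP b hbS)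
      obtain ⟨hw2, hwt2⟩ := iwf_append (c := c) hw1 (hQ a haS)
      have hclosed : IsClosedWalk E ([a, b] ++ (P b hbS).tail ++ (Q a haS).tail) :=
        ⟨hw2.1, by simp, by rw [hw2.2.1, hw2.2.2]⟩
      have h0 := hnn _ hclosed
      rw [hwt2, hwt1] at h0
      have hwab : walkWeight c [a, b] = c a b := by simp [walkWeight]
      rw [hwab] at h0
      have h1 := hPQ a haS
      have h2 := hPQ b hbS
      rw [hqS a haS, hqS b hbS]
      linarith
    refine ⟨hRk, ?_⟩
    intro e he
    have heEkc : e ∈ Ekc := hRk he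
    have heS1 : e.1 ∈ S := by rw [hEkc] at heEkc; exact heEkc.2.1
    have heS2 : e.2 ∈ S := by rw [hEkc] at heEkc; exact heEkc.2.2.1
    have hwalkEkc : ∃ l, IsWalkFrom Ekc e.1 e.2 l :=
      ⟨[e.1, e.2], iwf_pair (by simpa using heEkc)⟩
    obtain ⟨l, hl⟩ := (hreach e.1 heS1 e.2 heS2).1 hwalkEkc
    obtain ⟨p, hp, hnd⟩ := walk_to_path l.length l le_rfl hl
    refine ⟨p, ⟨hp, hnd⟩, ?_⟩
    have hle : walkWeight c p ≤ q e.2 - q e.1 :=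
      walk_weight_le (fun a b hab => hedge a b hab.1) p hp
    have hge : q e.2 - q e.1 ≤ c e.1 e.2 := hedge2 e.1 e.2 (by simpa using heEkc)
    linarith
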